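/- Let G be a bipartite graph with parts A and B with e(G) ≥ ρ|A||B| for ρ ∈ (0,1), and let s be a positive integer. If ρ|A| is sufficiently large relative to s (say ρ|A| ≥ 6s! and ρ^s|B| ≥ 1), then there are at least (ρ|A|)^s/(3·s!) many s-element subsets S ⊆ A such that the vertices of S have at least ρ^s|B|/3 common neighbors in B. -/

import Mathlib

open Finset
open scoped Classical

lemma count_lemma' {α β : Type} (A : Finset α) (B : Finset β) (G : Finset (α × β)) (s : ℕ) :
    ∑ S ∈ A.powersetCard s, (B.filter fun b => ∀ a ∈ S, (a, b) ∈ G).card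
      = ∑ b ∈ B, ((A.filter fun a => (a, b) ∈ G).card).choose s := by
  have h1 : ∀ b : β, ((A.powersetCard s).filter fun S => ∀ a ∈ S, (a, b) ∈ G)
      = (A.filter fun a => (a, b) ∈ G).powersetCard s := by
    intro b
    ext S
    simp only [mem_filter, mem_powersetCard, subset_iff, mem_filter]
    constructor
    · rintro ⟨⟨hSA, hcard⟩, hall⟩
      exact ⟨@fun x ha => ⟨hSA ha, hall _ ha⟩, hcard⟩
    · rintro ⟨hsub, hcard⟩
      exact ⟨⟨@fun x ha => (hsub ha).1, hcard⟩, fun a ha => (hsub ha).2⟩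
  calc ∑ S ∈ A.powersetCard s, (B.filter fun b => ∀ a ∈ S, (a, b) ∈ G).card
      = ∑ S ∈ A.powersetCard s, ∑ b ∈ B, if (∀ a ∈ S, (a, b) ∈ G) then 1 else 0 :=
        Finset.sum_congr rfl fun S _ => Finset.card_filter _ _
    _ = ∑ b ∈ B, ∑ S ∈ A.powersetCard s, if (∀ a ∈ S, (a, b) ∈ G) then 1 else 0 :=
        Finset.sum_comm
    _ = ∑ b ∈ B, ((A.powersetCard s).filter fun S => ∀ a ∈ S, (a, b) ∈ G).card :=
        Finset.sum_congr rfl fun b _ => (Finset.card_filter _ _).symm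
    _ = _ := by
        refine Finset.sum_congr rfl fun b _ => ?_
        rw [h1 b, Finset.card_powersetCard]

lemma deg_sum' {α β : Type} (A : Finset α) (B : Finset β) (G : Finset (α × β))
    (hG : G ⊆ A ×ˢ B) :
    ∑ b ∈ B, (A.filter fun a => (a, b) ∈ G).card = G.card := by
  rw [Finset.card_eq_sum_card_fiberwise
    (f := Prod.snd) (fun p hp => (Finset.mem_product.1 (hG hp)).2)]
  refine Finset.sum_congr rfl fun b _ => ?_
  refine Finset.card_bij (fun a _ => (a, b)) ?_ ?_ ?_
  · intro a ha
    simp only [mem_filter] at ha ⊢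
    exact ⟨ha.2, trivial⟩
  · intro a1 h1 a2 h2 h
    exact congrArg Prod.fst h
  · rintro ⟨a, b'⟩ hp
    simp only [mem_filter] at hp
    obtain ⟨hpG, hpb⟩ := hp
    subst hpb
    exact ⟨a, mem_filter.2 ⟨(Finset.mem_product.1 (hG hpG)).1, hpG⟩, rfl⟩

set_option maxHeartbeats 1000000 in
theorem stmt_1 {α β : Type} (A : Finset α) (B : Finset β) (G : Finset (α × β))
    (hG : G ⊆ A ×ˢ B) (ρ : ℝ) (hρ0 : 0 < ρ) (hρ1 : ρ < 1)
    (he : ρ * A.card * B.card ≤ (G.card : ℝ))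
    (s : ℕ) (hs : 1 ≤ s)
    (hbig : 6 * (s.factorial : ℝ) ≤ ρ * A.card) (hB : 1 ≤ ρ ^ s * B.card) :
    (ρ * A.card) ^ s / (3 * (s.factorial : ℝ)) ≤
      (((A.powersetCard s).filter fun S =>
        ρ ^ s * B.card / 3 ≤
          ((B.filter fun b => ∀ a ∈ S, (a, b) ∈ G).card : ℝ)).card : ℝ) := by
  set n : ℝ := (A.card : ℝ) with hn
  set m : ℝ := (B.card : ℝ) with hm
  set F : ℝ := (s.factorial : ℝ) with hF
  have hFpos : (0:ℝ) < F := by rw [hF]; exact_mod_cast s.factorial_pos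
  have hm1 : (1:ℝ) ≤ m := by
    have hρs : ρ ^ s ≤ 1 := pow_le_one₀ hρ0.le hρ1.le
    have hm0' : (0:ℝ) ≤ m := by rw [hm]; positivity
    nlinarith [hB]
  have hm0 : (0:ℝ) < m := lt_of_lt_of_le one_pos hm1
  have hρn_pos : (0:ℝ) < ρ * n := lt_of_lt_of_le (by positivity) hbig
  have hsF : (s:ℝ) * ((s:ℝ) - 1) ≤ F := by
    obtain ⟨k, rfl⟩ := Nat.exists_eq_add_of_le hs
    have h1 : (1 + k) * k ≤ (1 + k).factorial := by
      rw [Nat.add_comm 1 k, Nat.factorial_succ]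
      exact Nat.mul_le_mul_left _ (Nat.self_le_factorial k)
    rw [hF]
    have := (Nat.cast_le (α := ℝ)).2 h1
    push_cast at this ⊢
    nlinarith [this]
  have hsF' : (s:ℝ) ≤ F := by
    rw [hF]; exact_mod_cast Nat.self_le_factorial s
  set d : β → ℕ := fun b => (A.filter fun a => (a, b) ∈ G).card with hd
  set x : β → ℝ := fun b => max ((d b : ℝ) - (s:ℝ) + 1) 0 with hx
  have hx0 : ∀ b, 0 ≤ x b := fun b => le_max_right _ _
  -- Claim A : pointwise lower bound on choose
  have hA : ∀ b, x b ^ s / F ≤ ((d b).choose s : ℝ) := by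
    intro b
    have h1 : x b ≤ ((d b + 1 - s : ℕ) : ℝ) := by
      rcases le_or_gt s (d b + 1) with h | h
      · have h0 : (s:ℝ) ≤ (d b : ℝ) + 1 := by exact_mod_cast h
        rw [Nat.cast_sub h]
        push_cast
        rw [hx]
        exact max_le (by linarith) (by linarith)
      · rw [Nat.sub_eq_zero_of_le h.le]
        have h0 : (d b : ℝ) + 1 < (s:ℝ) := by exact_mod_cast h
        rw [hx]
        exact max_le (by push_cast; linarith) (by norm_num)
    calc x b ^ s / F ≤ ((d b + 1 - s : ℕ) : ℝ) ^ s / F := by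
          gcongr
      _ ≤ ((d b).choose s : ℝ) := by rw [hF]; exact Nat.pow_le_choose s (d b)
  -- Claim B : lower bound on sum of x
  have hdsum : (∑ b ∈ B, (d b : ℝ)) = (G.card : ℝ) := by
    rw [hd]
    exact_mod_cast deg_sum' A B G hG
  have hBsum : m * (ρ * n - (s:ℝ) + 1) ≤ ∑ b ∈ B, x b := by
    have h1 : ∀ b ∈ B, (d b : ℝ) - (s:ℝ) + 1 ≤ x b := fun b _ => le_max_left _ _
    have h2 := Finset.sum_le_sum h1
    have h3 : ∑ b ∈ B, ((d b : ℝ) - (s:ℝ) + 1) = (G.card : ℝ) - m * s + m := by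
      rw [Finset.sum_add_distrib, Finset.sum_sub_distrib, hdsum, Finset.sum_const,
        Finset.sum_const]
      rw [hm]
      push_cast
      ring
    rw [h3] at h2
    nlinarith [he, h2]
  -- Claim C : power mean
  have hpos1 : (0:ℝ) ≤ ρ * n - (s:ℝ) + 1 := by nlinarith [hsF', hFpos]
  have hC : m * (ρ * n - (s:ℝ) + 1) ^ s ≤ ∑ b ∈ B, x b ^ s := by
    have hc := pow_sum_div_card_le_sum_pow (s := B) (f := x) (fun b _ => hx0 b) (s - 1)
    rw [Nat.sub_add_cancel hs] at hc
    have h2 : (m * (ρ * n - (s:ℝ) + 1)) ^ s / m ^ (s-1) ≤ (∑ b ∈ B, x b) ^ s / (m:ℝ) ^ (s-1) := by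
      gcongr
    have h3 : (m * (ρ * n - (s:ℝ) + 1)) ^ s / m ^ (s-1) = m * (ρ * n - (s:ℝ) + 1) ^ s := by
      have hms : m ^ s = m ^ (s-1) * m := by rw [← pow_succ, Nat.sub_add_cancel hs]
      rw [mul_pow, hms]
      field_simp
    rw [h3] at h2
    refine h2.trans (le_trans ?_ hc)
    rw [hm]
  -- Claim D : Bernoulli
  have hD : (5/6 : ℝ) * (ρ * n) ^ s ≤ (ρ * n - (s:ℝ) + 1) ^ s := by
    set t : ℝ := ((s:ℝ) - 1) / (ρ * n) with ht
    have hs1 : (1:ℝ) ≤ (s:ℝ) := by exact_mod_cast hs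
    have ht0 : 0 ≤ t := by
      apply div_nonneg _ hρn_pos.le
      linarith
    have hst : (s:ℝ) * t ≤ 1/6 := by
      rw [ht, mul_div_assoc']
      rw [div_le_div_iff₀ hρn_pos (by norm_num)]
      linarith [hsF, hbig]
    have htle : t ≤ 1/6 := le_trans (by nlinarith [ht0, hs1]) hst
    have hbern : 1 - (s:ℝ) * t ≤ (1 - t) ^ s := by
      have hh := one_add_mul_le_pow (a := -t) (by linarith) s
      calc 1 - (s:ℝ) * t = 1 + (s:ℝ) * (-t) := by ring
        _ ≤ (1 + (-t)) ^ s := hh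
        _ = (1 - t) ^ s := by ring_nf
    have heq : (1 - t) * (ρ * n) = ρ * n - (s:ℝ) + 1 := by
      rw [ht]
      rw [sub_mul, div_mul_cancel₀ _ hρn_pos.ne']
      ring
    calc (5/6 : ℝ) * (ρ * n) ^ s ≤ (1 - (s:ℝ) * t) * (ρ * n) ^ s := by
          nlinarith [hst, pow_nonneg hρn_pos.le s]
      _ ≤ (1 - t) ^ s * (ρ * n) ^ s := by
          nlinarith [hbern, pow_nonneg hρn_pos.le s]
      _ = ((1 - t) * (ρ * n)) ^ s := (mul_pow _ _ _).symm
      _ = (ρ * n - (s:ℝ) + 1) ^ s := by rw [heq]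
  -- lower bound on sum of chooses
  set C : ℝ := ∑ b ∈ B, ((d b).choose s : ℝ) with hCdef
  have h_low : m * ((5/6 : ℝ) * (ρ * n) ^ s) ≤ C * F := by
    have h1 : ∑ b ∈ B, x b ^ s ≤ C * F := by
      calc ∑ b ∈ B, x b ^ s = ∑ b ∈ B, (x b ^ s / F) * F := by
            refine Finset.sum_congr rfl fun b _ => ?_
            field_simp
        _ ≤ ∑ b ∈ B, ((d b).choose s : ℝ) * F := by
            apply Finset.sum_le_sum
            intro b _
            exact mul_le_mul_of_nonneg_right (hA b) hFpos.le
        _ = C * F := by rw [hCdef, ← Finset.sum_mul]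
    nlinarith [hC, hD, h1, hm0]
  -- upper bound : split the sum over s-sets
  set P := A.powersetCard s with hP
  set good := P.filter (fun S => ρ ^ s * m / 3 ≤
      ((B.filter fun b => ∀ a ∈ S, (a, b) ∈ G).card : ℝ)) with hgood
  set gc : ℝ := (good.card : ℝ) with hgc
  have hgc0 : 0 ≤ gc := by rw [hgc]; positivity
  set Pc : ℝ := (P.card : ℝ) with hPc
  have h_P : Pc * F ≤ n ^ s := by
    rw [hPc, hF, hn, hP, Finset.card_powersetCard]
    have h1 : s.factorial * (A.card.choose s) ≤ A.card ^ s := by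
      rw [← Nat.descFactorial_eq_factorial_mul_choose]
      exact Nat.descFactorial_le_pow _ _
    calc ((A.card.choose s : ℕ) : ℝ) * ((s.factorial : ℕ) : ℝ)
        = ((s.factorial * A.card.choose s : ℕ) : ℝ) := by push_cast; ring
      _ ≤ ((A.card ^ s : ℕ) : ℝ) := by exact_mod_cast h1
      _ = (A.card : ℝ) ^ s := by push_cast; ring
  have hcount : (∑ S ∈ P, ((B.filter fun b => ∀ a ∈ S, (a, b) ∈ G).card : ℝ)) = C := by
    rw [hCdef, hd, hP]
    exact_mod_cast count_lemma' A B G s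
  have h_up : C ≤ gc * m + Pc * (ρ ^ s * m / 3) := by
    rw [← hcount]
    have hsplit := Finset.sum_filter_add_sum_filter_not P
      (fun S => ρ ^ s * m / 3 ≤ ((B.filter fun b => ∀ a ∈ S, (a, b) ∈ G).card : ℝ))
      (fun S => ((B.filter fun b => ∀ a ∈ S, (a, b) ∈ G).card : ℝ))
    rw [← hsplit]
    have hA1 : ∑ S ∈ good, ((B.filter fun b => ∀ a ∈ S, (a, b) ∈ G).card : ℝ) ≤ gc * m := by
      calc ∑ S ∈ good, ((B.filter fun b => ∀ a ∈ S, (a, b) ∈ G).card : ℝ)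
          ≤ ∑ S ∈ good, m := by
            apply Finset.sum_le_sum
            intro S _
            rw [hm]
            exact_mod_cast Finset.card_filter_le _ _
        _ = gc * m := by rw [Finset.sum_const, hgc, nsmul_eq_mul]
    have hA2 : ∑ S ∈ P.filter (fun S => ¬ (ρ ^ s * m / 3 ≤
          ((B.filter fun b => ∀ a ∈ S, (a, b) ∈ G).card : ℝ))),
          ((B.filter fun b => ∀ a ∈ S, (a, b) ∈ G).card : ℝ)
        ≤ Pc * (ρ ^ s * m / 3) := by
      calc ∑ S ∈ P.filter (fun S => ¬ (ρ ^ s * m / 3 ≤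
              ((B.filter fun b => ∀ a ∈ S, (a, b) ∈ G).card : ℝ))),
              ((B.filter fun b => ∀ a ∈ S, (a, b) ∈ G).card : ℝ)
          ≤ ∑ S ∈ P.filter (fun S => ¬ (ρ ^ s * m / 3 ≤
              ((B.filter fun b => ∀ a ∈ S, (a, b) ∈ G).card : ℝ))), (ρ ^ s * m / 3) := by
            apply Finset.sum_le_sum
            intro S hS
            exact (lt_of_not_ge (Finset.mem_filter.1 hS).2).le
        _ = ((P.filter (fun S => ¬ (ρ ^ s * m / 3 ≤
              ((B.filter fun b => ∀ a ∈ S, (a, b) ∈ G).card : ℝ)))).card : ℝ)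
              * (ρ ^ s * m / 3) := by rw [Finset.sum_const, nsmul_eq_mul]
        _ ≤ Pc * (ρ ^ s * m / 3) := by
            apply mul_le_mul_of_nonneg_right _ (by positivity)
            rw [hPc]
            exact_mod_cast Finset.card_filter_le _ _
    exact add_le_add hA1 hA2
  -- conclude
  clear_value gc Pc C F m n
  rw [div_le_iff₀ (by positivity : (0:ℝ) < 3 * F)]
  have e1 : C * F ≤ (gc * m + Pc * (ρ ^ s * m / 3)) * F :=
    mul_le_mul_of_nonneg_right h_up hFpos.le
  have e2 : Pc * (ρ ^ s * m / 3) * F ≤ n ^ s * (ρ ^ s * m / 3) := by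
    have := mul_le_mul_of_nonneg_right h_P (show (0:ℝ) ≤ ρ ^ s * m / 3 by positivity)
    nlinarith [this]
  have e3 : n ^ s * (ρ ^ s * m / 3) = (ρ * n) ^ s * m / 3 := by rw [mul_pow]; ring
  have e4 : m * ((5/6:ℝ) * (ρ * n) ^ s) ≤ gc * m * F + (ρ * n) ^ s * m / 3 := by
    nlinarith [h_low, e1, e2, e3]
  have e5 : m * ((ρ * n) ^ s / 2) ≤ m * (gc * F) := by nlinarith [e4]
  have e6 : (ρ * n) ^ s / 2 ≤ gc * F := le_of_mul_le_mul_left e5 hm0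
  nlinarith [e6, mul_nonneg hgc0 hFpos.le, pow_nonneg hρn_pos.le s]
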